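/- (Larson's Lemma 3.7) For every infinite N ⊆ ℕ and all natural numbers m and l with l > 0, there is an m-element set M of strictly increasing finite sequences of naturals such that every pair {x,y} ⊆ M has form l and its interaction scheme i_l({x,y}) has all entries in N. -/

import Mathlib

/-- Accumulated lengths of a list of lists. -/
def accLengths : ℕ → List (List ℕ) → List ℕ
  | _, [] => []
  | acc, l :: ls => (acc + l.length) :: accLengths (acc + l.length) ls

/-- Interleaved concatenation of two lists of lists. -/
def interact : List (List ℕ) → List (List ℕ) → List ℕ
  | [], ys => ys.flatten
  | x :: xs, [] => (x :: xs).flatten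
  | x :: xs, y :: ys => x ++ y ++ interact xs ys

/-- `FormBody ka kb x y zs`: `x` decomposes into `ka` nonempty pieces, `y` into `kb`
nonempty pieces, and `zs` is the associated interaction scheme
`c ∗ a₁ ∗ d ∗ b₁ ∗ a₂ ∗ b₂ ∗ …`, which is strictly increasing (equivalently the
interleaving condition `c < a₁ < d < b₁ < a₂ < … ` holds). -/
def FormBody (ka kb : ℕ) (x y zs : List ℕ) : Prop :=
  ∃ a as b bs, x.length < y.length ∧
    x = (a :: as).flatten ∧ y = (b :: bs).flatten ∧
    (∀ l ∈ a :: as, l ≠ []) ∧ (∀ l ∈ b :: bs, l ≠ []) ∧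
    (a :: as).length = ka ∧ (b :: bs).length = kb ∧
    zs = accLengths 0 (a :: as) ++ a ++ accLengths 0 (b :: bs) ++ b ++ interact as bs ∧
    List.Pairwise (· < ·) zs

/-- `zs` is the interaction scheme `i_l({x,y})` of the pair `{x,y}` of form `l`. -/
def InterScheme (l : ℕ) (x y zs : List ℕ) : Prop :=
  (∃ k, 0 < k ∧ l = 2 * k - 1 ∧ FormBody k k x y zs) ∨
  (∃ k, 0 < k ∧ l = 2 * k ∧ FormBody (k + 1) k x y zs)

namespace L37

/-! ### segments -/

def seg (f : ℕ → ℕ) (a n : ℕ) : List ℕ := (List.range' a n).map f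

@[simp] lemma seg_zero (f a) : seg f a 0 = [] := rfl

@[simp] lemma length_seg (f a n) : (seg f a n).length = n := by
  simp [seg]

lemma seg_ne_nil (f a n) (h : 0 < n) : seg f a n ≠ [] := by
  intro he
  have := congrArg List.length he
  simp at this; omega

lemma seg_succ (f a n) : seg f a (n+1) = f a :: seg f (a+1) n := by
  simp [seg, List.range'_succ]

lemma seg_concat (f a n) : seg f a (n+1) = seg f a n ++ [f (a + n)] := by
  simp [seg, List.range'_concat]

@[simp] lemma head?_seg (f a n) (h : 0 < n) : (seg f a n).head? = some (f a) := by
  obtain ⟨n, rfl⟩ : ∃ m, n = m + 1 := ⟨n - 1, by omega⟩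
  rw [seg_succ]; rfl

@[simp] lemma getLast?_seg (f a n) (h : 0 < n) :
    (seg f a n).getLast? = some (f (a + n - 1)) := by
  obtain ⟨n, rfl⟩ : ∃ m, n = m + 1 := ⟨n - 1, by omega⟩
  have h1 : a + (n + 1) - 1 = a + n := by omega
  rw [h1, seg_concat, List.getLast?_append]
  rfl

@[simp] lemma seg_one (f : ℕ → ℕ) (c : ℕ) : seg f c 1 = [f c] := rfl

lemma getLastD_seg (f : ℕ → ℕ) (a n d : ℕ) (h : 0 < n) :
    (seg f a n).getLastD d = f (a + n - 1) := by
  obtain ⟨n, rfl⟩ : ∃ m, n = m + 1 := ⟨n - 1, by omega⟩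
  rw [seg_concat]
  simp

lemma mem_seg {f a n x} (h : x ∈ seg f a n) : ∃ i, a ≤ i ∧ i < a + n ∧ x = f i := by
  simp only [seg, List.mem_map, List.mem_range'_1] at h
  obtain ⟨i, hi, rfl⟩ := h
  exact ⟨i, hi.1, hi.2, rfl⟩

lemma chain'_seg {f : ℕ → ℕ} (hf : StrictMono f) (a n : ℕ) :
    (seg f a n).IsChain (· < ·) := by
  induction n generalizing a with
  | zero => simp
  | succ n ih =>
    rw [seg_succ]
    rcases Nat.eq_zero_or_pos n with h | h
    · subst h; simp
    · rw [List.isChain_cons]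
      refine ⟨?_, ih (a+1)⟩
      rw [head?_seg _ _ _ h]
      rintro y ⟨rfl⟩
      exact hf (by omega)

/-! ### partial sums and accLengths -/

def psum (a : ℕ) : List ℕ → List ℕ
  | [] => []
  | n :: ns => (a + n) :: psum (a + n) ns

lemma psum_append (ms ns : List ℕ) : ∀ a,
    psum a (ms ++ ns) = psum a ms ++ psum (a + ms.sum) ns := by
  induction ms with
  | nil => intro a; simp [psum]
  | cons n ms ih =>
    intro a
    simp only [List.cons_append, List.append_eq, psum, List.sum_cons, ih (a + n)]
    rw [Nat.add_assoc]

lemma accLengths_eq_psum (a : ℕ) (L : List (List ℕ)) :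
    accLengths a L = psum a (L.map List.length) := by
  induction L generalizing a with
  | nil => rfl
  | cons l ls ih => simp [accLengths, psum, ih]

lemma psum_telescope (g : ℕ → ℕ) (hg : Monotone g) :
    ∀ n t, psum (g t) ((List.range' (t+1) n).map (fun u => g u - g (u-1)))
      = seg g (t+1) n := by
  intro n
  induction n with
  | zero => intro t; rfl
  | succ n ih =>
    intro t
    rw [List.range'_succ]
    simp only [List.map_cons, psum, seg_succ]
    have h1 : g t + (g (t+1) - g (t+1-1)) = g (t+1) := by
      have : t + 1 - 1 = t := by omega
      rw [this]
      have := hg (show t ≤ t + 1 by omega)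
      omega
    rw [h1]
    exact congrArg _ (ih (t+1))

lemma psum_getLastD : ∀ (ms : List ℕ) (a : ℕ), (psum a ms).getLastD a = a + ms.sum := by
  intro ms
  induction ms with
  | nil => simp [psum]
  | cons n ns ih =>
    intro a
    simp only [psum, List.getLastD_cons, List.sum_cons]
    rw [ih]
    omega

lemma length_flatten_eq (L : List (List ℕ)) :
    L.flatten.length = (accLengths 0 L).getLastD 0 := by
  rw [accLengths_eq_psum, psum_getLastD, List.length_flatten]
  omega

/-! ### interleaving -/

def ilv : List (List ℕ) → List (List ℕ) → List (List ℕ)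
  | [], ys => ys
  | x :: xs, [] => x :: xs
  | x :: xs, y :: ys => x :: y :: ilv xs ys

lemma interact_eq_flatten_ilv : ∀ xs ys, interact xs ys = (ilv xs ys).flatten
  | [], ys => rfl
  | x :: xs, [] => rfl
  | x :: xs, y :: ys => by
    simp only [interact, ilv, List.flatten_cons, interact_eq_flatten_ilv xs ys,
      List.append_assoc]

def altB (Pi Pj : ℕ → List ℕ) (suf : List (List ℕ)) : ℕ → ℕ → List (List ℕ)
  | _, 0 => suf
  | t, n+1 => Pi t :: Pj t :: altB Pi Pj suf (t+1) n

lemma ilv_map_range' (Pi Pj : ℕ → List ℕ) (A B : List (List ℕ)) :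
    ∀ n t, ilv ((List.range' t n).map Pi ++ A) ((List.range' t n).map Pj ++ B)
      = altB Pi Pj (ilv A B) t n := by
  intro n
  induction n with
  | zero => intro t; simp [altB]
  | succ n ih =>
    intro t
    rw [List.range'_succ]
    simp only [List.map_cons, List.cons_append, ilv, altB, List.append_eq]
    rw [ih (t+1)]

lemma mem_altB {Pi Pj suf} : ∀ {n t l}, l ∈ altB Pi Pj suf t n →
    l ∈ suf ∨ ∃ u, t ≤ u ∧ u < t + n ∧ (l = Pi u ∨ l = Pj u) := by
  intro n
  induction n with
  | zero => intro t l h; exact Or.inl h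
  | succ n ih =>
    intro t l h
    simp only [altB, List.mem_cons] at h
    rcases h with rfl | rfl | h
    · exact Or.inr ⟨t, le_refl _, by omega, Or.inl rfl⟩
    · exact Or.inr ⟨t, le_refl _, by omega, Or.inr rfl⟩
    · rcases ih h with h | ⟨u, hu1, hu2, hu3⟩
      · exact Or.inl h
      · exact Or.inr ⟨u, by omega, by omega, hu3⟩

/-- The junction relation between blocks. -/
def blT (L1 L2 : List ℕ) : Prop := ∀ x ∈ L1.getLast?, ∀ y ∈ L2.head?, x < y

lemma head?_altB {Pi Pj suf t n} (h : 0 < n) :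
    (altB Pi Pj suf t n).head? = some (Pi t) := by
  obtain ⟨n, rfl⟩ : ∃ m, n = m + 1 := ⟨n - 1, by omega⟩
  rfl

lemma chain'_altB {Pi Pj : ℕ → List ℕ} {suf : List (List ℕ)} :
    ∀ {n t}, (∀ u, t ≤ u → u < t + n → blT (Pi u) (Pj u)) →
    (∀ u, t ≤ u → u + 1 < t + n → blT (Pj u) (Pi (u+1))) →
    (∀ u, t ≤ u → u < t + n → ∀ c ∈ suf.head?, blT (Pj u) c) →
    List.IsChain blT suf →
    List.IsChain blT (altB Pi Pj suf t n) := by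
  intro n
  induction n with
  | zero => intro t _ _ _ h; exact h
  | succ n ih =>
    intro t h1 h2 h3 hsuf
    show List.IsChain blT (Pi t :: Pj t :: altB Pi Pj suf (t+1) n)
    rw [List.isChain_cons_cons]
    refine ⟨h1 t le_rfl (by omega), ?_⟩
    rw [List.isChain_cons]
    refine ⟨?_, ih (fun u hu1 hu2 => h1 u (by omega) (by omega))
      (fun u hu1 hu2 => h2 u (by omega) (by omega))
      (fun u hu1 hu2 => h3 u (by omega) (by omega)) hsuf⟩
    intro y hy
    rcases Nat.eq_zero_or_pos n with rfl | hn
    · intro x hx z hz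
      exact h3 t le_rfl (by omega) y hy x hx z hz
    · rw [head?_altB hn] at hy
      obtain ⟨rfl⟩ := hy
      exact h2 t le_rfl (by omega)

lemma sorted_flatten {L : List (List ℕ)} (hne : ∀ l ∈ L, l ≠ [])
    (hs : ∀ l ∈ L, l.IsChain (· < ·)) (hc : List.IsChain blT L) :
    List.Pairwise (· < ·) L.flatten := by
  rw [← List.isChain_iff_pairwise]
  rw [List.isChain_flatten (by intro h; exact hne [] h rfl)]
  exact ⟨hs, hc⟩

lemma blT_of_seg {f : ℕ → ℕ} (hf : StrictMono f) {a n b m : ℕ} (h : a + n ≤ b) :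
    blT (seg f a n) (seg f b m) := by
  intro x hx y hy
  rcases Nat.eq_zero_or_pos n with rfl | hn
  · simp [seg] at hx
  rcases Nat.eq_zero_or_pos m with rfl | hm
  · simp [seg] at hy
  rw [getLast?_seg _ _ _ hn] at hx
  rw [head?_seg _ _ _ hm] at hy
  obtain ⟨rfl⟩ := hx; obtain ⟨rfl⟩ := hy
  exact hf (by omega)

lemma blT_append_right {L1 L2 L3 : List ℕ} (h2 : L2 ≠ []) (h : blT L1 L2) :
    blT L1 (L2 ++ L3) := by
  intro x hx y hy
  rw [List.head?_append] at hy
  cases hl : L2.head? with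
  | none => exact absurd (List.head?_eq_none_iff.mp hl) h2
  | some z => rw [hl] at hy; simp at hy; subst hy; exact h x hx z (by rw [hl]; rfl)

lemma blT_append_left {L1 L2 L3 : List ℕ} (h2 : L3 ≠ []) (h : blT L3 L2) :
    blT (L1 ++ L3) L2 := by
  intro x hx y hy
  rw [List.getLast?_append] at hx
  cases hl : L3.getLast? with
  | none => exact absurd (List.getLast?_eq_none_iff.mp hl) h2
  | some z => rw [hl] at hx; simp at hx; subst hx; exact h z (by rw [hl]; rfl) y hy

lemma chain'_lt_append {L1 L2 : List ℕ} (h1 : L1.IsChain (· < ·)) (h2 : L2.IsChain (· < ·))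
    (h : blT L1 L2) : (L1 ++ L2).IsChain (· < ·) := by
  rw [List.isChain_append]
  exact ⟨h1, h2, h⟩

end L37

namespace L37

/-! ### the construction -/

section Constr
variable (f : ℕ → ℕ) (K m : ℕ)

def q : ℕ → ℕ
  | 0 => 0
  | j+1 => q j + K + f (q j)

def slot (T j t : ℕ) : ℕ := if t ≤ T then (t-1)*m + j else T*m + (m-1-j)

def st (T j t : ℕ) : ℕ :=
  if t = 0 then q f K j + K else q f K m + slot m T j t * f (q f K m)

def ln (j t : ℕ) : ℕ :=
  if t = 0 then f (q f K j) else f (q f K j + t) - f (q f K j + t - 1)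

def P (T j t : ℕ) : List ℕ := seg f (st f K m T j t) (ln f K j t)

def XL (T j : ℕ) : List (List ℕ) := (List.range' 0 K).map (P f K m T j)

def sq (T j : ℕ) : List ℕ := (XL f K m T j).flatten

end Constr

section Facts
variable {f : ℕ → ℕ} {K m : ℕ}

lemma q_succ (j : ℕ) : q f K (j+1) = q f K j + K + f (q f K j) := rfl

lemma q_mono : Monotone (q f K) :=
  monotone_nat_of_le_succ (fun j => by rw [q_succ]; omega)

lemma q_strictMono (hK : 0 < K) : StrictMono (q f K) :=
  strictMono_nat_of_lt_succ (fun j => by rw [q_succ]; omega)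

lemma q_step_le {i j : ℕ} (hij : i < j) :
    q f K i + K + f (q f K i) ≤ q f K j := by
  have h := q_mono (f := f) (K := K) (show i + 1 ≤ j from hij)
  rw [q_succ] at h; exact h

@[simp] lemma ln_zero (j : ℕ) : ln f K j 0 = f (q f K j) := rfl

lemma ln_succ (j t : ℕ) (ht : t ≠ 0) :
    ln f K j t = f (q f K j + t) - f (q f K j + t - 1) := by
  simp [ln, ht]

@[simp] lemma st_zero (j : ℕ) : st f K m T j 0 = q f K j + K := rfl

lemma st_pos (T j t : ℕ) (ht : t ≠ 0) :
    st f K m T j t = q f K m + slot m T j t * f (q f K m) := by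
  simp [st, ht]

lemma ln_pos (hf : StrictMono f) (hf1 : ∀ n, 0 < f n) (j t : ℕ) : 0 < ln f K j t := by
  rcases Nat.eq_zero_or_pos t with rfl | ht
  · simpa using hf1 (q f K j)
  · rw [ln_succ _ _ (by omega)]
    have := hf (show q f K j + t - 1 < q f K j + t by omega)
    omega

lemma ln_le (hf : StrictMono f) (j t : ℕ) (hj : j < m) (htK : t < K) : ln f K j t ≤ f (q f K m) := by
  have hqm : q f K j + t < q f K m := by
    have h1 := q_step_le (f := f) (K := K) hj
    omega
  have h2 := hf.monotone hqm.le
  rcases Nat.eq_zero_or_pos t with rfl | ht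
  · simpa using h2
  · rw [ln_succ _ _ (by omega)]; omega

lemma P_ne_nil (hf : StrictMono f) (hf1 : ∀ n, 0 < f n) (T j t : ℕ) : P f K m T j t ≠ [] :=
  seg_ne_nil _ _ _ (ln_pos hf hf1 j t)

lemma chain'_P (hf : StrictMono f) (T j t : ℕ) : (P f K m T j t).IsChain (· < ·) := chain'_seg hf _ _

lemma blk_le (hf : StrictMono f) {T j t j' t' : ℕ} (hj : j < m) (ht : t ≠ 0) (htK : t < K) (ht' : t' ≠ 0)
    (hs : slot m T j t < slot m T j' t') :
    st f K m T j t + ln f K j t ≤ st f K m T j' t' := by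
  rw [st_pos _ _ _ ht, st_pos _ _ _ ht']
  have h1 : ln f K j t ≤ f (q f K m) := ln_le hf j t hj htK
  have h2 : (slot m T j t + 1) * f (q f K m) ≤ slot m T j' t' * f (q f K m) :=
    Nat.mul_le_mul_right _ hs
  rw [Nat.succ_mul] at h2
  omega

lemma blT_PP (hf : StrictMono f) {T j t j' t' : ℕ} (hj : j < m) (ht : t ≠ 0) (htK : t < K) (ht' : t' ≠ 0)
    (hs : slot m T j t < slot m T j' t') :
    blT (P f K m T j t) (P f K m T j' t') :=
  blT_of_seg hf (blk_le hf hj ht htK ht' hs)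

lemma B_le_st (T j t : ℕ) (ht : t ≠ 0) : q f K m ≤ st f K m T j t := by
  rw [st_pos _ _ _ ht]; omega

lemma blT_P0 (hf : StrictMono f) {T j j' t : ℕ} (hj : j < m) (ht : t ≠ 0) :
    blT (P f K m T j 0) (P f K m T j' t) := by
  apply blT_of_seg hf
  rw [st_zero, ln_zero]
  have h1 := q_step_le (f := f) (K := K) hj
  have h2 := B_le_st (f := f) (K := K) (m := m) T j' t ht
  omega

/-! slot comparisons -/

lemma slot_lt_round {T i j t t' : ℕ} (ht : 1 ≤ t) (htt' : t < t') (ht' : t' ≤ T)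
    (hj : j < m) : slot m T j t < slot m T i t' := by
  rw [slot, if_pos (by omega), slot, if_pos ht']
  have h1 : (t - 1 + 1) * m ≤ (t' - 1) * m := Nat.mul_le_mul_right _ (by omega)
  rw [Nat.succ_mul] at h1
  omega

lemma slot_lt_same {T i j t : ℕ} (ht : 1 ≤ t) (htT : t ≤ T) (hij : i < j) :
    slot m T i t < slot m T j t := by
  rw [slot, if_pos htT, slot, if_pos htT]
  omega

lemma slot_lt_tail {T i j t t' : ℕ} (ht : 1 ≤ t) (htT : t ≤ T) (ht' : T < t')
    (hj : j < m) : slot m T j t < slot m T i t' := by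
  rw [slot, if_pos htT, slot, if_neg (by omega)]
  have h1 : (t - 1 + 1) * m ≤ T * m := Nat.mul_le_mul_right _ (by omega)
  rw [Nat.succ_mul] at h1
  omega

lemma slot_tail_rev {T i j t t' : ℕ} (hT : T < t) (hT' : T < t') (hij : i < j)
    (hj : j < m) : slot m T j t < slot m T i t' := by
  rw [slot, if_neg (by omega), slot, if_neg (by omega)]
  omega

/-! accumulated lengths -/

lemma seg_comp_add (f : ℕ → ℕ) (c : ℕ) :
    ∀ n t, seg (fun u => f (c + u)) t n = seg f (c + t) n := by
  intro n
  induction n with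
  | zero => intro t; rfl
  | succ n ih =>
    intro t
    rw [seg_succ, seg_succ, ih (t+1), Nat.add_assoc]

lemma psum_ln (hf : StrictMono f) (j r : ℕ) (hr : 1 ≤ r) :
    psum 0 ((List.range' 0 r).map (ln f K j)) = seg f (q f K j) r := by
  obtain ⟨n, rfl⟩ : ∃ n, r = n + 1 := ⟨r - 1, by omega⟩
  rw [List.range'_succ]
  simp only [List.map_cons, psum, Nat.zero_add, ln_zero]
  have hmap : (List.range' 1 n).map (ln f K j)
      = (List.range' 1 n).map (fun u => f (q f K j + u) - f (q f K j + (u - 1))) := by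
    apply List.map_congr_left
    intro u hu
    rw [List.mem_range'_1] at hu
    rw [ln_succ _ _ (by omega)]
    congr 2
    omega
  have hmono : Monotone (fun v => f (q f K j + v)) := by
    intro a b hab
    exact hf.monotone (by omega)
  have h2 := psum_telescope (fun v => f (q f K j + v)) hmono n 0
  simp only [Nat.zero_add, Nat.add_zero] at h2
  rw [seg_comp_add] at h2
  rw [hmap, h2, seg_succ]

lemma map_length_XL (T j : ℕ) :
    (XL f K m T j).map List.length = (List.range' 0 K).map (ln f K j) := by
  rw [XL, List.map_map]
  apply List.map_congr_left
  intro t _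
  simp [P]

lemma accLengths_XL (hf : StrictMono f) (hK : 0 < K) (T j : ℕ) :
    accLengths 0 (XL f K m T j) = seg f (q f K j) K := by
  rw [accLengths_eq_psum, map_length_XL, psum_ln hf _ _ hK]

lemma length_sq (hf : StrictMono f) (hK : 0 < K) (T j : ℕ) :
    (sq f K m T j).length = f (q f K j + (K - 1)) := by
  rw [sq, length_flatten_eq, accLengths_XL hf hK]
  obtain ⟨n, rfl⟩ : ∃ n, K = n + 1 := ⟨K - 1, by omega⟩
  rw [seg_concat]
  simp

lemma mem_sq (T j : ℕ) : ∀ a ∈ sq f K m T j, ∃ u, a = f u := by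
  intro a ha
  rw [sq, List.mem_flatten] at ha
  obtain ⟨l, hl, hal⟩ := ha
  rw [XL, List.mem_map] at hl
  obtain ⟨t, _, rfl⟩ := hl
  obtain ⟨u, _, _, rfl⟩ := mem_seg hal
  exact ⟨u, rfl⟩

lemma chain'_range'_of (R : ℕ → ℕ → Prop) :
    ∀ n t, (∀ u, t ≤ u → u + 1 < t + n → R u (u+1)) → List.IsChain R (List.range' t n) := by
  intro n
  induction n with
  | zero => intro t _; simp
  | succ n ih =>
    intro t h
    rw [List.range'_succ, List.isChain_cons]
    constructor
    · intro y hy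
      rcases Nat.eq_zero_or_pos n with rfl | hn
      · simp at hy
      · obtain ⟨n', rfl⟩ : ∃ n', n = n' + 1 := ⟨n - 1, by omega⟩
        rw [List.range'_succ] at hy
        simp at hy
        obtain rfl : y = t + 1 := by omega
        exact h t le_rfl (by omega)
    · exact ih (t+1) (fun u hu1 hu2 => h u (by omega) (by omega))

lemma sorted_sq (hf : StrictMono f) (hf1 : ∀ n, 0 < f n) (hK : 0 < K) {T j : ℕ} (hT : T = K - 1 ∨ T = K - 2) (hj : j < m) :
    List.Pairwise (· < ·) (sq f K m T j) := by
  apply sorted_flatten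
  · intro l hl
    rw [XL, List.mem_map] at hl
    obtain ⟨t, _, rfl⟩ := hl
    exact P_ne_nil hf hf1 T j t
  · intro l hl
    rw [XL, List.mem_map] at hl
    obtain ⟨t, _, rfl⟩ := hl
    exact chain'_P hf T j t
  · rw [XL, List.isChain_map]
    apply chain'_range'_of
    intro u hu hu2
    simp only [Nat.zero_add] at hu2
    rcases Nat.eq_zero_or_pos u with rfl | hupos
    · exact blT_P0 hf hj (by omega)
    · apply blT_PP hf hj (by omega) (by omega) (by omega)
      rcases hT with rfl | rfl
      · exact slot_lt_round hupos (by omega) (by omega) hj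
      · rcases Nat.lt_or_ge (u+1) (K-1) with h | h
        · exact slot_lt_round hupos (by omega) (by omega) hj
        · exact slot_lt_tail hupos (by omega) (by omega) hj

end Facts
end L37

namespace L37

section Pair
variable {f : ℕ → ℕ} {m : ℕ}

lemma range'_zero_eq (k : ℕ) (hk : 0 < k) :
    List.range' 0 k = 0 :: List.range' 1 (k-1) := by
  obtain ⟨n, rfl⟩ : ∃ n, k = n + 1 := ⟨k - 1, by omega⟩
  rw [List.range'_succ]
  simp

lemma pair_odd (hf : StrictMono f) (hf1 : ∀ n, 0 < f n) {k : ℕ} (hk : 0 < k)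
    {i j : ℕ} (hij : i < j) (hj : j < m) :
    ∃ zs, FormBody k k (sq f k m (k-1) i) (sq f k m (k-1) j) zs ∧
      ∀ a ∈ zs, ∃ u, a = f u := by
  have him : i < m := lt_trans hij hj
  set T := k - 1 with hT
  set a := P f k m T i 0 with ha
  set b := P f k m T j 0 with hb
  set asL := (List.range' 1 (k-1)).map (P f k m T i) with hasL
  set bsL := (List.range' 1 (k-1)).map (P f k m T j) with hbsL
  have hXi : XL f k m T i = a :: asL := by
    rw [XL, range'_zero_eq k hk, List.map_cons]
  have hXj : XL f k m T j = b :: bsL := by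
    rw [XL, range'_zero_eq k hk, List.map_cons]
  have hacci : accLengths 0 (a :: asL) = seg f (q f k i) k := by
    rw [← hXi, accLengths_XL hf hk]
  have haccj : accLengths 0 (b :: bsL) = seg f (q f k j) k := by
    rw [← hXj, accLengths_XL hf hk]
  set zs := accLengths 0 (a :: asL) ++ a ++ accLengths 0 (b :: bsL) ++ b
      ++ interact asL bsL with hzs
  -- block description of zs
  have hilv : ilv asL bsL = altB (P f k m T i) (P f k m T j) [] 1 (k-1) := by
    have h := ilv_map_range' (P f k m T i) (P f k m T j) [] [] (k-1) 1
    simpa [ilv] using h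
  set Bz := seg f (q f k i) k :: a :: seg f (q f k j) k :: b ::
      altB (P f k m T i) (P f k m T j) [] 1 (k-1) with hBz
  have hzfl : zs = Bz.flatten := by
    rw [hzs, hacci, haccj, interact_eq_flatten_ilv, hilv, hBz]
    simp [List.append_assoc]
  have hmemBz : ∀ l ∈ Bz, ∃ c n, l = seg f c n := by
    intro l hl
    rw [hBz] at hl
    simp only [List.mem_cons] at hl
    rcases hl with rfl | rfl | rfl | rfl | hl
    · exact ⟨_, _, rfl⟩
    · exact ⟨_, _, rfl⟩
    · exact ⟨_, _, rfl⟩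
    · exact ⟨_, _, rfl⟩
    · rcases mem_altB hl with h | ⟨u, _, _, h | h⟩
      · simp at h
      · exact ⟨_, _, by rw [h]; rfl⟩
      · exact ⟨_, _, by rw [h]; rfl⟩
  have hsort : List.Pairwise (· < ·) zs := by
    rw [hzfl]
    apply sorted_flatten
    · intro l hl
      rw [hBz] at hl
      simp only [List.mem_cons] at hl
      rcases hl with rfl | rfl | rfl | rfl | hl
      · exact seg_ne_nil _ _ _ hk
      · exact P_ne_nil hf hf1 _ _ _
      · exact seg_ne_nil _ _ _ hk
      · exact P_ne_nil hf hf1 _ _ _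
      · rcases mem_altB hl with h | ⟨u, _, _, h | h⟩
        · simp at h
        · rw [h]; exact P_ne_nil hf hf1 _ _ _
        · rw [h]; exact P_ne_nil hf hf1 _ _ _
    · intro l hl
      obtain ⟨c, n, rfl⟩ := hmemBz l hl
      exact chain'_seg hf _ _
    · rw [hBz, List.isChain_cons_cons, List.isChain_cons_cons, List.isChain_cons_cons]
      refine ⟨?_, ?_, ?_, ?_⟩
      · exact blT_of_seg hf (by rw [st_zero])
      · apply blT_of_seg hf
        rw [st_zero, ln_zero]
        exact q_step_le hij
      · exact blT_of_seg hf (by rw [st_zero])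
      · rw [List.isChain_cons]
        constructor
        · intro y hy
          rcases Nat.eq_zero_or_pos (k-1) with h0 | hpos
          · rw [h0] at hy; simp [altB] at hy
          · rw [head?_altB hpos] at hy
            obtain ⟨rfl⟩ := hy
            exact blT_P0 hf hj (by omega)
        · apply chain'_altB
          · intro u hu1 hu2
            exact blT_PP hf him (by omega) (by omega) (by omega)
              (slot_lt_same hu1 (by omega) hij)
          · intro u hu1 hu2
            exact blT_PP hf hj (by omega) (by omega) (by omega)
              (slot_lt_round hu1 (by omega) (by omega) hj)
          · intro u _ _ c hc
            simp at hc
          · exact List.isChain_nil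
  refine ⟨zs, ⟨a, asL, b, bsL, ?_, ?_, ?_, ?_, ?_, ?_, ?_, rfl, hsort⟩, ?_⟩
  · rw [length_sq hf hk, length_sq hf hk]
    exact hf (by have := q_strictMono (f := f) (K := k) hk hij; omega)
  · rw [sq, hXi]
  · rw [sq, hXj]
  · intro l hl
    rw [← hXi, XL, List.mem_map] at hl
    obtain ⟨t, _, rfl⟩ := hl
    exact P_ne_nil hf hf1 _ _ _
  · intro l hl
    rw [← hXj, XL, List.mem_map] at hl
    obtain ⟨t, _, rfl⟩ := hl
    exact P_ne_nil hf hf1 _ _ _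
  · simp [hasL]; omega
  · simp [hbsL]; omega
  · intro x hx
    rw [hzfl, List.mem_flatten] at hx
    obtain ⟨l, hl, hxl⟩ := hx
    obtain ⟨c, n, rfl⟩ := hmemBz l hl
    obtain ⟨u, _, _, rfl⟩ := mem_seg hxl
    exact ⟨u, rfl⟩

end Pair
end L37

namespace L37

section PairEven
variable {f : ℕ → ℕ} {m : ℕ}

lemma pair_even_one (hf : StrictMono f) (hf1 : ∀ n, 0 < f n)
    {i j : ℕ} (hij : i < j) (hj : j < m) :
    ∃ zs, FormBody 2 1 (sq f 2 m 0 i) (sq f 2 m 0 j) zs ∧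
      ∀ a ∈ zs, ∃ u, a = f u := by
  have him : i < m := lt_trans hij hj
  have hr2 : List.range' 0 2 = [0, 1] := rfl
  have hXi : XL f 2 m 0 i = [P f 2 m 0 i 0, P f 2 m 0 i 1] := by
    rw [XL, hr2]; rfl
  have hXj : XL f 2 m 0 j = [P f 2 m 0 j 0, P f 2 m 0 j 1] := by
    rw [XL, hr2]; rfl
  set a := P f 2 m 0 i 0 with ha
  set b := P f 2 m 0 j 0 ++ P f 2 m 0 j 1 with hb
  have hacci : accLengths 0 [P f 2 m 0 i 0, P f 2 m 0 i 1] = seg f (q f 2 i) 2 := by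
    rw [← hXi, accLengths_XL hf (by omega)]
  have hmono1 : f (q f 2 j) ≤ f (q f 2 j + 1) := hf.monotone (by omega)
  have hblen : b.length = f (q f 2 j + 1) := by
    rw [hb]
    simp only [List.length_append, P, length_seg, ln_zero, ln_succ _ _ (one_ne_zero)]
    have e : q f 2 j + 1 - 1 = q f 2 j := by omega
    rw [e]
    omega
  have haccj : accLengths 0 [b] = [f (q f 2 j + 1)] := by
    simp [accLengths, hblen]
  set zs := accLengths 0 [P f 2 m 0 i 0, P f 2 m 0 i 1] ++ a
      ++ accLengths 0 [b] ++ b ++ interact [P f 2 m 0 i 1] [] with hzs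
  set Bz := [seg f (q f 2 i) 2, a, seg f (q f 2 j + 1) 1, b, P f 2 m 0 i 1] with hBz
  have hzfl : zs = Bz.flatten := by
    rw [hzs, hacci, haccj, hBz, hb]
    show _ ++ _ ++ _ ++ _ ++ ([P f 2 m 0 i 1].flatten) = _
    simp [List.append_assoc]
  have hsort : List.Pairwise (· < ·) zs := by
    rw [hzfl]
    apply sorted_flatten
    · intro l hl
      rw [hBz] at hl
      simp only [List.mem_cons] at hl
      rcases hl with rfl | rfl | rfl | rfl | rfl | h
      · exact seg_ne_nil _ _ _ (by omega)
      · exact P_ne_nil hf hf1 _ _ _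
      · exact seg_ne_nil _ _ _ (by omega)
      · rw [hb]; intro hcon
        exact P_ne_nil hf hf1 0 j 0 (List.append_eq_nil_iff.mp hcon).1
      · exact P_ne_nil hf hf1 _ _ _
      · simp at h
    · intro l hl
      rw [hBz] at hl
      simp only [List.mem_cons] at hl
      rcases hl with rfl | rfl | rfl | rfl | rfl | h
      · exact chain'_seg hf _ _
      · exact chain'_P hf _ _ _
      · exact chain'_seg hf _ _
      · exact chain'_lt_append (chain'_P hf _ _ _) (chain'_P hf _ _ _)
          (blT_P0 hf hj one_ne_zero)
      · exact chain'_P hf _ _ _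
      · simp at h
    · rw [hBz, List.isChain_cons_cons, List.isChain_cons_cons, List.isChain_cons_cons, List.isChain_cons_cons]
      refine ⟨?_, ?_, ?_, ?_, ?_⟩
      · exact blT_of_seg hf (by rw [st_zero])
      · apply blT_of_seg hf
        rw [st_zero, ln_zero]
        have := q_step_le (f := f) (K := 2) hij
        omega
      · rw [hb]
        apply blT_append_right (P_ne_nil hf hf1 _ _ _)
        exact blT_of_seg hf (by rw [st_zero])
      · rw [hb]
        apply blT_append_left (P_ne_nil hf hf1 _ _ _)
        exact blT_PP hf hj one_ne_zero (by omega) one_ne_zero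
          (slot_tail_rev (by omega) (by omega) hij hj)
      · simp
  refine ⟨zs, ⟨a, [P f 2 m 0 i 1], b, [], ?_, ?_, ?_, ?_, ?_, rfl, rfl, rfl, hsort⟩, ?_⟩
  · rw [length_sq hf (by omega), length_sq hf (by omega)]
    exact hf (by have := q_strictMono (f := f) (K := 2) (by omega) hij; omega)
  · rw [sq, hXi]
  · rw [sq, hXj, hb]
    simp
  · intro l hl
    simp only [List.mem_cons] at hl
    rcases hl with rfl | rfl | h
    · exact P_ne_nil hf hf1 _ _ _
    · exact P_ne_nil hf hf1 _ _ _
    · simp at h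
  · intro l hl
    simp only [List.mem_cons] at hl
    rcases hl with rfl | h
    · rw [hb]; intro hcon
      exact P_ne_nil hf hf1 0 j 0 (List.append_eq_nil_iff.mp hcon).1
    · simp at h
  · intro x hx
    rw [hzfl, List.mem_flatten] at hx
    obtain ⟨l, hl, hxl⟩ := hx
    rw [hBz] at hl
    simp only [List.mem_cons] at hl
    have hseg : ∀ c n, x ∈ seg f c n → ∃ u, x = f u := by
      intro c n hx'
      obtain ⟨u, _, _, rfl⟩ := mem_seg hx'
      exact ⟨u, rfl⟩
    rcases hl with rfl | rfl | rfl | rfl | rfl | h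
    · exact hseg _ _ hxl
    · exact hseg _ _ hxl
    · exact hseg _ _ hxl
    · rw [hb, List.mem_append] at hxl
      rcases hxl with hxl | hxl
      · exact hseg _ _ hxl
      · exact hseg _ _ hxl
    · exact hseg _ _ hxl
    · simp at h

end PairEven
end L37

namespace L37
section PairEven2
variable {f : ℕ → ℕ} {m : ℕ}

lemma pair_even_big (hf : StrictMono f) (hf1 : ∀ n, 0 < f n) {k : ℕ} (hk : 2 ≤ k)
    {i j : ℕ} (hij : i < j) (hj : j < m) :
    ∃ zs, FormBody (k+1) k (sq f (k+1) m (k-1) i) (sq f (k+1) m (k-1) j) zs ∧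
      ∀ a ∈ zs, ∃ u, a = f u := by
  have him : i < m := lt_trans hij hj
  have e1 : k - 1 + 1 = k := by omega
  have hr2 : List.range' (k-1) 2 = [k-1, k] := by
    rw [List.range'_succ, e1, List.range'_one]
  have h3 : List.range' 0 (k-1) ++ List.range' (k-1) 2 = List.range' 0 (k+1) := by
    have h := List.range'_append (s := 0) (m := k-1) (n := 2) (step := 1)
    simp only [Nat.one_mul, Nat.zero_add] at h
    rw [h]; congr 1; omega
  have hsplitj : List.range' 0 (k+1) = (0 :: List.range' 1 (k-2)) ++ [k-1, k] := by
    rw [← h3, hr2, range'_zero_eq (k-1) (by omega),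
      show (k-1-1) = k-2 from by omega]
  have hsplita : List.range' 1 k = List.range' 1 (k-2) ++ [k-1, k] := by
    have h := List.range'_append (s := 1) (m := k-2) (n := 2) (step := 1)
    simp only [Nat.one_mul] at h
    rw [show (1 + (k-2)) = k - 1 from by omega] at h
    rw [← hr2, h]; congr 1; omega
  set a := P f (k+1) m (k-1) i 0 with ha
  set b := P f (k+1) m (k-1) j 0 with hb
  set asL := (List.range' 1 k).map (P f (k+1) m (k-1) i) with hasL
  set bsL := (List.range' 1 (k-2)).map (P f (k+1) m (k-1) j)
      ++ [P f (k+1) m (k-1) j (k-1) ++ P f (k+1) m (k-1) j k] with hbsL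
  have hXi : XL f (k+1) m (k-1) i = a :: asL := by
    rw [XL, range'_zero_eq (k+1) (by omega), List.map_cons]
    simp
    exact ⟨rfl, rfl⟩
  have hacci : accLengths 0 (a :: asL) = seg f (q f (k+1) i) (k+1) := by
    rw [← hXi, accLengths_XL hf (by omega)]
  have hyfl : sq f (k+1) m (k-1) j = (b :: bsL).flatten := by
    rw [sq, XL, hsplitj, hbsL]
    simp [List.append_assoc]
    rfl
  have hfirstlen : ((List.range' 0 (k-1)).map (P f (k+1) m (k-1) j)).map List.length
      = (List.range' 0 (k-1)).map (ln f (k+1) j) := by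
    rw [List.map_map]
    apply List.map_congr_left
    intro t _
    simp [P]
  have hsum : ((List.range' 0 (k-1)).map (ln f (k+1) j)).sum
      = f (q f (k+1) j + (k-2)) := by
    have h := psum_getLastD ((List.range' 0 (k-1)).map (ln f (k+1) j)) 0
    rw [psum_ln hf _ _ (by omega), getLastD_seg _ _ _ _ (by omega),
      show q f (k+1) j + (k-1) - 1 = q f (k+1) j + (k-2) from by omega] at h
    omega
  have haccj : accLengths 0 (b :: bsL)
      = seg f (q f (k+1) j) (k-1) ++ [f (q f (k+1) j + k)] := by
    have hcons : b :: bsL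
        = (List.range' 0 (k-1)).map (P f (k+1) m (k-1) j)
          ++ [P f (k+1) m (k-1) j (k-1) ++ P f (k+1) m (k-1) j k] := by
      rw [hbsL, range'_zero_eq (k-1) (by omega),
        show (k - 1 - 1) = k - 2 from by omega, List.map_cons]
      rfl
    rw [hcons, accLengths_eq_psum, List.map_append, psum_append, hfirstlen,
      psum_ln hf _ _ (by omega)]
    congr 1
    simp only [List.map_cons, List.map_nil, List.length_append, P, length_seg, psum]
    rw [hsum, ln_succ _ _ (by omega), ln_succ _ _ (by omega)]
    congr 1
    rw [show q f (k+1) j + (k-1) - 1 = q f (k+1) j + (k-2) from by omega,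
      show q f (k+1) j + k - 1 = q f (k+1) j + (k-1) from by omega]
    have m1 : f (q f (k+1) j + (k-2)) ≤ f (q f (k+1) j + (k-1)) := hf.monotone (by omega)
    have m2 : f (q f (k+1) j + (k-1)) ≤ f (q f (k+1) j + k) := hf.monotone (by omega)
    omega
  set suf := [P f (k+1) m (k-1) i (k-1),
      P f (k+1) m (k-1) j (k-1) ++ P f (k+1) m (k-1) j k,
      P f (k+1) m (k-1) i k] with hsuf
  have hilv : ilv asL bsL
      = altB (P f (k+1) m (k-1) i) (P f (k+1) m (k-1) j) suf 1 (k-2) := by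
    rw [hasL, hbsL, hsplita, List.map_append, ilv_map_range']
    rfl
  set zs := accLengths 0 (a :: asL) ++ a ++ accLengths 0 (b :: bsL) ++ b
      ++ interact asL bsL with hzs
  set Bz := seg f (q f (k+1) i) (k+1) :: a :: seg f (q f (k+1) j) (k-1)
      :: seg f (q f (k+1) j + k) 1 :: b
      :: altB (P f (k+1) m (k-1) i) (P f (k+1) m (k-1) j) suf 1 (k-2) with hBz
  have hzfl : zs = Bz.flatten := by
    rw [hzs, hacci, haccj, interact_eq_flatten_ilv, hilv, hBz]
    simp [List.append_assoc]
  have hsort : List.Pairwise (· < ·) zs := by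
    rw [hzfl]
    apply sorted_flatten
    · intro l hl
      rw [hBz] at hl
      simp only [List.mem_cons] at hl
      rcases hl with rfl | rfl | rfl | rfl | rfl | hl
      · exact seg_ne_nil _ _ _ (by omega)
      · exact P_ne_nil hf hf1 _ _ _
      · exact seg_ne_nil _ _ _ (by omega)
      · exact seg_ne_nil _ _ _ (by omega)
      · exact P_ne_nil hf hf1 _ _ _
      · rcases mem_altB hl with h | ⟨u, _, _, h | h⟩
        · rw [hsuf] at h
          simp only [List.mem_cons] at h
          rcases h with rfl | rfl | rfl | h
          · exact P_ne_nil hf hf1 _ _ _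
          · intro hcon
            exact P_ne_nil hf hf1 (k-1) j (k-1) (List.append_eq_nil_iff.mp hcon).1
          · exact P_ne_nil hf hf1 _ _ _
          · simp at h
        · rw [h]; exact P_ne_nil hf hf1 _ _ _
        · rw [h]; exact P_ne_nil hf hf1 _ _ _
    · intro l hl
      rw [hBz] at hl
      simp only [List.mem_cons] at hl
      rcases hl with rfl | rfl | rfl | rfl | rfl | hl
      · exact chain'_seg hf _ _
      · exact chain'_P hf _ _ _
      · exact chain'_seg hf _ _
      · exact chain'_seg hf _ _
      · exact chain'_P hf _ _ _
      · rcases mem_altB hl with h | ⟨u, _, _, h | h⟩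
        · rw [hsuf] at h
          simp only [List.mem_cons] at h
          rcases h with rfl | rfl | rfl | h
          · exact chain'_P hf _ _ _
          · exact chain'_lt_append (chain'_P hf _ _ _) (chain'_P hf _ _ _)
              (blT_PP hf hj (by omega) (by omega) (by omega)
                (slot_lt_tail (by omega) (by omega) (by omega) hj))
          · exact chain'_P hf _ _ _
          · simp at h
        · rw [h]; exact chain'_P hf _ _ _
        · rw [h]; exact chain'_P hf _ _ _
    · rw [hBz, List.isChain_cons_cons, List.isChain_cons_cons, List.isChain_cons_cons, List.isChain_cons_cons]
      refine ⟨?_, ?_, ?_, ?_, ?_⟩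
      · exact blT_of_seg hf (by rw [st_zero])
      · apply blT_of_seg hf
        rw [st_zero, ln_zero]
        have h := q_step_le (f := f) (K := k+1) hij
        omega
      · exact blT_of_seg hf (by omega)
      · exact blT_of_seg hf (by rw [st_zero]; omega)
      · rw [List.isChain_cons]
        constructor
        · intro y hy
          rcases Nat.eq_zero_or_pos (k-2) with h0 | hpos
          · rw [h0] at hy
            simp only [altB, hsuf, List.head?_cons, Option.mem_some_iff] at hy
            subst hy
            exact blT_P0 hf hj (by omega)
          · rw [head?_altB hpos] at hy
            obtain ⟨rfl⟩ := hy
            exact blT_P0 hf hj one_ne_zero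
        · apply chain'_altB
          · intro u hu1 hu2
            exact blT_PP hf him (by omega) (by omega) (by omega)
              (slot_lt_same hu1 (by omega) hij)
          · intro u hu1 hu2
            exact blT_PP hf hj (by omega) (by omega) (by omega)
              (slot_lt_round hu1 (by omega) (by omega) hj)
          · intro u hu1 hu2 c hc
            rw [hsuf] at hc
            simp only [List.head?_cons, Option.mem_some_iff] at hc
            subst hc
            exact blT_PP hf hj (by omega) (by omega) (by omega)
              (slot_lt_round hu1 (by omega) (by omega) hj)
          · rw [hsuf, List.isChain_cons_cons, List.isChain_cons_cons]
            refine ⟨?_, ?_, ?_⟩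
            · apply blT_append_right (P_ne_nil hf hf1 _ _ _)
              exact blT_PP hf him (by omega) (by omega) (by omega)
                (slot_lt_same (by omega) le_rfl hij)
            · apply blT_append_left (P_ne_nil hf hf1 _ _ _)
              exact blT_PP hf hj (by omega) (by omega) (by omega)
                (slot_tail_rev (by omega) (by omega) hij hj)
            · simp
  refine ⟨zs, ⟨a, asL, b, bsL, ?_, ?_, hyfl, ?_, ?_, ?_, ?_, rfl, hsort⟩, ?_⟩
  · rw [length_sq hf (by omega), length_sq hf (by omega)]
    exact hf (by have := q_strictMono (f := f) (K := k+1) (by omega) hij; omega)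
  · rw [sq, hXi]
  · intro l hl
    rw [← hXi, XL, List.mem_map] at hl
    obtain ⟨t, _, rfl⟩ := hl
    exact P_ne_nil hf hf1 _ _ _
  · intro l hl
    simp only [List.mem_cons, hbsL, List.mem_append, List.mem_map,
      List.mem_singleton] at hl
    rcases hl with rfl | ⟨t, _, rfl⟩ | (rfl | h)
    · exact P_ne_nil hf hf1 _ _ _
    · exact P_ne_nil hf hf1 _ _ _
    · intro hcon
      exact P_ne_nil hf hf1 (k-1) j (k-1) (List.append_eq_nil_iff.mp hcon).1
    · simp at h
  · simp [hasL]
  · simp [hbsL]; omega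
  · intro x hx
    rw [hzfl, List.mem_flatten] at hx
    obtain ⟨l, hl, hxl⟩ := hx
    have hseg : ∀ c n, x ∈ seg f c n → ∃ u, x = f u := by
      intro c n hx'
      obtain ⟨u, _, _, rfl⟩ := mem_seg hx'
      exact ⟨u, rfl⟩
    rw [hBz] at hl
    simp only [List.mem_cons] at hl
    rcases hl with rfl | rfl | rfl | rfl | rfl | hl
    · exact hseg _ _ hxl
    · exact hseg _ _ hxl
    · exact hseg _ _ hxl
    · exact hseg _ _ hxl
    · exact hseg _ _ hxl
    · rcases mem_altB hl with h | ⟨u, _, _, h | h⟩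
      · rw [hsuf] at h
        simp only [List.mem_cons] at h
        rcases h with rfl | rfl | rfl | h
        · exact hseg _ _ hxl
        · rw [List.mem_append] at hxl
          rcases hxl with hxl | hxl
          · exact hseg _ _ hxl
          · exact hseg _ _ hxl
        · exact hseg _ _ hxl
        · simp at h
      · rw [h] at hxl; exact hseg _ _ hxl
      · rw [h] at hxl; exact hseg _ _ hxl

end PairEven2
end L37


namespace L37
section Wrap
variable {f : ℕ → ℕ} {m : ℕ}

lemma pair_even (hf : StrictMono f) (hf1 : ∀ n, 0 < f n) {k : ℕ} (hk : 0 < k)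
    {i j : ℕ} (hij : i < j) (hj : j < m) :
    ∃ zs, FormBody (k+1) k (sq f (k+1) m (k-1) i) (sq f (k+1) m (k-1) j) zs ∧
      ∀ a ∈ zs, ∃ u, a = f u := by
  rcases Nat.lt_or_ge k 2 with h | h
  · have hk1 : k = 1 := by omega
    subst hk1
    exact pair_even_one hf hf1 hij hj
  · exact pair_even_big hf hf1 h hij hj

end Wrap
end L37


/-- Larson's Lemma 3.7: for every infinite `N ⊆ ℕ`, `m` and `l > 0` there is an
`m`-element set `M` of strictly increasing sequences such that every pair from `M`
has form `l` with interaction scheme contained in `N`. -/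
theorem lemma_3_7 (N : Set ℕ) (hN : N.Infinite) (m l : ℕ) (hl : 0 < l) :
    ∃ M : Finset (List ℕ), M.card = m ∧ (∀ x ∈ M, List.Pairwise (· < ·) x) ∧
      ∀ x ∈ M, ∀ y ∈ M, x ≠ y →
        ∃ zs, (InterScheme l x y zs ∨ InterScheme l y x zs) ∧ ∀ a ∈ zs, a ∈ N := by
  classical
  open L37 in
  have hinf : {n | n ∈ N}.Infinite := by rwa [Set.setOf_mem_eq]
  set f : ℕ → ℕ := fun n => Nat.nth (fun x => x ∈ N) (n+1) with hfdef
  have hf : StrictMono f := fun x y h => Nat.nth_strictMono hinf (by omega)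
  have hf1 : ∀ n, 0 < f n := by
    intro n
    have h0 := Nat.nth_strictMono hinf (show 0 < n + 1 by omega)
    simp only [hfdef]
    omega
  have hfN : ∀ n, f n ∈ N := fun n => Nat.nth_mem_of_infinite hinf (n+1)
  -- a generic assembly given K, T and a pair-lemma
  have main : ∀ K T : ℕ, 0 < K → (T = K - 1 ∨ T = K - 2) →
      (∀ i j : ℕ, i < j → j < m →
        ∃ zs, (InterScheme l (L37.sq f K m T i) (L37.sq f K m T j) zs) ∧
          ∀ a ∈ zs, ∃ u, a = f u) →
      ∃ M : Finset (List ℕ), M.card = m ∧ (∀ x ∈ M, List.Pairwise (· < ·) x) ∧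
        ∀ x ∈ M, ∀ y ∈ M, x ≠ y →
          ∃ zs, (InterScheme l x y zs ∨ InterScheme l y x zs) ∧ ∀ a ∈ zs, a ∈ N := by
    intro K T hK hT hpair
    refine ⟨(Finset.range m).image (L37.sq f K m T), ?_, ?_, ?_⟩
    · rw [Finset.card_image_of_injOn, Finset.card_range]
      intro x hx y hy hxy
      have hlen := congrArg List.length hxy
      rw [L37.length_sq hf hK, L37.length_sq hf hK] at hlen
      have := hf.injective hlen
      have := (L37.q_strictMono (f := f) (K := K) hK).injective (by omega : L37.q f K x = L37.q f K y)
      exact this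
    · intro x hx
      obtain ⟨j, hj, rfl⟩ := Finset.mem_image.mp hx
      exact L37.sorted_sq hf hf1 hK hT (Finset.mem_range.mp hj)
    · intro x hx y hy hne
      obtain ⟨i, hi, rfl⟩ := Finset.mem_image.mp hx
      obtain ⟨j, hj, rfl⟩ := Finset.mem_image.mp hy
      rw [Finset.mem_range] at hi hj
      have hij : i ≠ j := fun h => hne (by rw [h])
      rcases Nat.lt_or_ge i j with h | h
      · obtain ⟨zs, hIS, hmem⟩ := hpair i j h hj
        exact ⟨zs, Or.inl hIS, fun a ha => by obtain ⟨u, rfl⟩ := hmem a ha; exact hfN u⟩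
      · have h' : j < i := by omega
        obtain ⟨zs, hIS, hmem⟩ := hpair j i h' hi
        exact ⟨zs, Or.inr hIS, fun a ha => by obtain ⟨u, rfl⟩ := hmem a ha; exact hfN u⟩
  rcases Nat.even_or_odd l with ⟨k, hk⟩ | ⟨k, hk⟩
  · -- l = k + k, even
    have hkpos : 0 < k := by omega
    apply main (k+1) (k-1) (by omega) (Or.inr (by omega))
    intro i j hij hj
    obtain ⟨zs, hFB, hmem⟩ := L37.pair_even hf hf1 hkpos hij hj
    exact ⟨zs, Or.inr ⟨k, hkpos, by omega, hFB⟩, hmem⟩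
  · -- l = 2k + 1, odd
    apply main (k+1) k (by omega) (Or.inl (by omega))
    intro i j hij hj
    have h1 : k + 1 - 1 = k := by omega
    obtain ⟨zs, hFB, hmem⟩ := L37.pair_odd hf hf1 (show 0 < k + 1 by omega) hij hj
    rw [h1] at hFB
    exact ⟨zs, Or.inl ⟨k+1, by omega, by omega, hFB⟩, hmem⟩
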